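/- Let I ⊆ ℝ be an interval, E a normed space, and W an open subset of E. Let k : I → ℝ_{>0} be a regulated function and f : I × W → E a function satisfying ‖f(t,x₁) − f(t,x₂)‖ ≤ k(t)‖x₁ − x₂‖ for all t ∈ I and x₁, x₂ ∈ W. Let u₁, u₂ : I → W be differentiable functions that are approximate solutions of the differential equation ċ(t) = f(t, c(t)) in the sense that ‖u̇ᵢ(t) − f(t, uᵢ(t))‖ ≤ εᵢ for all t ∈ I and i = 1, 2. Then for t₀ ∈ I and all t ∈ I with t ≥ t₀: ‖u₁(t) − u₂(t)‖ ≤ ‖u₁(t₀) − u₂(t₀)‖·Λ(t) + (ε₁ + ε₂)·Π(t), where Λ(t) = 1 + ∫_{t₀}^{t} k(s) exp(∫_{s}^{t} k(τ) dτ) ds and Π(t) = (t − t₀) + ∫_{t₀}^{t} (s − t₀) k(s) exp(∫_{s}^{t} k(τ) dτ) ds. -/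

import Mathlib

/-- A function `k` is regulated on a set `I ⊆ ℝ` if it admits one-sided limits
(from within `I`) at every point of `I`. -/
def RegulatedOn (k : ℝ → ℝ) (I : Set ℝ) : Prop :=
  ∀ t ∈ I, (∃ l : ℝ, Filter.Tendsto k (nhdsWithin t (I ∩ Set.Iio t)) (nhds l)) ∧
    (∃ l : ℝ, Filter.Tendsto k (nhdsWithin t (I ∩ Set.Ioi t)) (nhds l))


open Set Filter MeasureTheory intervalIntegral Topology UniformSpace



/-- A set of reals each of whose points is isolated from the right (within the set)
is countable. -/
lemma countable_of_right_isolated {S : Set ℝ}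
    (h : ∀ t ∈ S, ∃ δ > 0, ∀ u ∈ S, u ∉ Set.Ioo t (t + δ)) : S.Countable := by
  have h' : ∀ t : ℝ, ∃ q : ℚ, t ∈ S → t < (q : ℝ) ∧ ∀ u ∈ S, u ∉ Set.Ioo t (q : ℝ) := by
    intro t
    by_cases ht : t ∈ S
    · obtain ⟨δ, hδ, hdis⟩ := h t ht
      obtain ⟨q, hq1, hq2⟩ := exists_rat_btwn (by linarith : t < t + δ)
      refine ⟨q, fun _ => ⟨hq1, fun u hu hmem => hdis u hu ⟨hmem.1, hmem.2.trans hq2⟩⟩⟩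
    · exact ⟨0, fun h' => absurd h' ht⟩
  choose q hq using h'
  rw [Set.countable_iff_exists_injOn]
  refine ⟨fun t => Encodable.encode (q t), fun t ht t' ht' hqe => ?_⟩
  have hqq : q t = q t' := Encodable.encode_injective hqe
  rcases lt_trichotomy t t' with hlt | heq | hgt
  · exact absurd (show t' ∈ Set.Ioo t ((q t : ℝ)) from ⟨hlt, by rw [hqq]; exact (hq t' ht').1⟩)
      ((hq t ht).2 t' ht') |> False.elim
  · exact heq
  · exact absurd (show t ∈ Set.Ioo t' ((q t' : ℝ)) from ⟨hgt, by rw [← hqq]; exact (hq t ht).1⟩)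
      ((hq t' ht').2 t ht) |> False.elim

/-- The set of points where a function with right limits (within `I`) fails to be
right-continuous is countable. -/
lemma countable_right_discont {k : ℝ → ℝ} {I : Set ℝ}
    (h : ∀ t ∈ I, ∃ l, Filter.Tendsto k (nhdsWithin t (I ∩ Set.Ioi t)) (nhds l)) :
    {t ∈ I | ¬ ContinuousWithinAt k (I ∩ Set.Ioi t) t}.Countable := by
  set D := {t ∈ I | ¬ ContinuousWithinAt k (I ∩ Set.Ioi t) t} with hD
  have hne : ∀ t ∈ D, (𝓝[I ∩ Set.Ioi t] t).NeBot := by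
    intro t ht
    rcases eq_or_neBot (𝓝[I ∩ Set.Ioi t] t) with hb | hb
    · exact absurd (show ContinuousWithinAt k (I ∩ Set.Ioi t) t by
        unfold ContinuousWithinAt; rw [hb]; exact tendsto_bot) ht.2
    · exact hb
  have hex : ∀ t : ℝ, ∃ r : ℝ, t ∈ D → Filter.Tendsto k (𝓝[I ∩ Set.Ioi t] t) (𝓝 r) := by
    intro t
    by_cases ht : t ∈ D
    · obtain ⟨l, hl⟩ := h t ht.1
      exact ⟨l, fun _ => hl⟩
    · exact ⟨0, fun h' => absurd h' ht⟩
  choose R hRt using hex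
  have hgap : ∀ t ∈ D, k t ≠ R t := by
    intro t ht heq
    apply ht.2
    have := hRt t ht
    rw [← heq] at this
    exact this
  have hcover : D ⊆ ⋃ n : ℕ, {t ∈ D | 1 / ((n : ℝ) + 1) < |k t - R t|} := by
    intro t ht
    have hpos : 0 < |k t - R t| := abs_pos.2 (sub_ne_zero.2 (hgap t ht))
    obtain ⟨n, hn⟩ := exists_nat_one_div_lt hpos
    exact Set.mem_iUnion.2 ⟨n, ht, hn⟩
  refine Set.Countable.mono hcover (Set.countable_iUnion fun n => ?_)
  apply countable_of_right_isolated
  intro t ht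
  set ε := 1 / ((n : ℝ) + 1) / 4 with hε
  have hεpos : 0 < ε := by positivity
  obtain ⟨δ, hδpos, hδ⟩ := Metric.tendsto_nhdsWithin_nhds.1 (hRt t ht.1) ε hεpos
  refine ⟨δ, hδpos, fun u hu hmem => ?_⟩
  have huI : u ∈ I := hu.1.1
  have hut : t < u := hmem.1
  have hudist : dist u t < δ := by
    rw [Real.dist_eq, abs_of_pos (by linarith)]; linarith [hmem.2]
  have hku : dist (k u) (R t) < ε := hδ ⟨huI, hut⟩ hudist
  have hnb : (𝓝[I ∩ Set.Ioi u] u).NeBot := hne u hu.1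
  have he1 : ∀ᶠ s in 𝓝[I ∩ Set.Ioi u] u, dist (k s) (R u) < ε :=
    (hRt u hu.1) (Metric.ball_mem_nhds _ hεpos)
  have he2 : ∀ᶠ s in 𝓝[I ∩ Set.Ioi u] u, s < t + δ :=
    eventually_nhdsWithin_of_eventually_nhds (Filter.Tendsto.eventually_lt_const hmem.2 tendsto_id)
  obtain ⟨s, hs1, hs2, hs3⟩ := (he1.and (he2.and eventually_mem_nhdsWithin)).exists
  have hsI : s ∈ I := hs3.1
  have hsu : u < s := hs3.2
  have hsdist : dist s t < δ := by
    rw [Real.dist_eq, abs_of_pos (by linarith)]; linarith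
  have hks : dist (k s) (R t) < ε := hδ ⟨hsI, Set.mem_Ioi.2 (lt_trans hut hsu)⟩ hsdist
  have hRu : dist (R u) (R t) ≤ 2 * ε := by
    calc dist (R u) (R t) ≤ dist (R u) (k s) + dist (k s) (R t) := dist_triangle _ _ _
    _ ≤ 2 * ε := by rw [dist_comm (R u)]; linarith
  have hlt3 : |k u - R u| < 3 * ε := by
    calc |k u - R u| = dist (k u) (R u) := (Real.dist_eq _ _).symm
    _ ≤ dist (k u) (R t) + dist (R t) (R u) := dist_triangle _ _ _
    _ < 3 * ε := by rw [dist_comm (R t)]; linarith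
  have h2 : 1 / ((n : ℝ) + 1) < |k u - R u| := hu.2
  have hpos : 0 < 1 / ((n : ℝ) + 1) := by positivity
  rw [hε] at hlt3
  linarith



lemma countable_left_discont {k : ℝ → ℝ} {I : Set ℝ}
    (h : ∀ t ∈ I, ∃ l, Filter.Tendsto k (nhdsWithin t (I ∩ Set.Iio t)) (nhds l)) :
    {t ∈ I | ¬ ContinuousWithinAt k (I ∩ Set.Iio t) t}.Countable := by
  set I' : Set ℝ := Neg.neg ⁻¹' I with hI'
  have hmapsfwd : ∀ t : ℝ, Set.MapsTo Neg.neg (I' ∩ Set.Ioi t) (I ∩ Set.Iio (-t)) := by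
    intro t s hs
    exact ⟨hs.1, Set.mem_Iio.2 (neg_lt_neg hs.2)⟩
  have hmapsbwd : ∀ t : ℝ, Set.MapsTo Neg.neg (I ∩ Set.Iio t) (I' ∩ Set.Ioi (-t)) := by
    intro t s hs
    refine ⟨by simpa [hI'] using hs.1, Set.mem_Ioi.2 (neg_lt_neg hs.2)⟩
  have htendneg : ∀ (t : ℝ) (S : Set ℝ),
      Filter.Tendsto Neg.neg (𝓝[S] t) (𝓝[Neg.neg '' S] (-t)) := by
    intro t S
    exact ContinuousWithinAt.tendsto_nhdsWithin (continuous_neg.continuousWithinAt)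
      (Set.mapsTo_image _ _)
  have key := countable_right_discont (k := k ∘ Neg.neg) (I := I') ?_
  · have hsub : {t ∈ I | ¬ ContinuousWithinAt k (I ∩ Set.Iio t) t} ⊆
        Neg.neg '' {t ∈ I' | ¬ ContinuousWithinAt (k ∘ Neg.neg) (I' ∩ Set.Ioi t) t} := by
      intro t ht
      refine ⟨-t, ⟨by simpa [hI'] using ht.1, fun hc => ht.2 ?_⟩, by simp⟩
      have h1 : Filter.Tendsto Neg.neg (𝓝[I ∩ Set.Iio t] t) (𝓝[I' ∩ Set.Ioi (-t)] (-t)) := by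
        have := ContinuousWithinAt.tendsto_nhdsWithin
          (continuous_neg.continuousWithinAt (s := I ∩ Set.Iio t) (x := t)) (hmapsbwd t)
        exact this
      have h2 : Filter.Tendsto ((k ∘ Neg.neg) ∘ Neg.neg) (𝓝[I ∩ Set.Iio t] t)
          (𝓝 ((k ∘ Neg.neg) (-t))) := Filter.Tendsto.comp hc h1
      have h3 : ((k ∘ Neg.neg) ∘ Neg.neg) = k := by funext x; simp
      rw [h3] at h2
      exact (by simpa using h2 : Filter.Tendsto k (𝓝[I ∩ Set.Iio t] t) (𝓝 (k t)))
    exact (key.image _).mono hsub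
  · intro t ht
    obtain ⟨l, hl⟩ := h (-t) ht
    refine ⟨l, ?_⟩
    have h1 : Filter.Tendsto Neg.neg (𝓝[I' ∩ Set.Ioi t] t) (𝓝[I ∩ Set.Iio (-t)] (-t)) :=
      ContinuousWithinAt.tendsto_nhdsWithin (continuous_neg.continuousWithinAt) (hmapsfwd t)
    exact hl.comp h1





/-- A regulated function is continuous within `I` off a countable set. -/
lemma countable_discont {k : ℝ → ℝ} {I : Set ℝ} (hreg : RegulatedOn k I) :
    {t ∈ I | ¬ ContinuousWithinAt k I t}.Countable := by
  have hR := countable_right_discont (fun t ht => (hreg t ht).2)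
  have hL := countable_left_discont (fun t ht => (hreg t ht).1)
  refine (hL.union hR).mono ?_
  intro t ht
  by_contra hc
  simp only [Set.mem_union, Set.mem_setOf_eq, not_or, not_and, not_not] at hc
  obtain ⟨hcl, hcr⟩ := hc
  apply ht.2
  have h1 : ContinuousWithinAt k (I ∩ Set.Iio t) t := hcl ht.1
  have h2 : ContinuousWithinAt k (I ∩ Set.Ioi t) t := hcr ht.1
  have hsub : I ⊆ (I ∩ Set.Iio t) ∪ ((I ∩ Set.Ioi t) ∪ {t}) := by
    intro s hs
    rcases lt_trichotomy s t with hlt | heq | hgt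
    · exact Or.inl ⟨hs, hlt⟩
    · exact Or.inr (Or.inr (by simp [heq]))
    · exact Or.inr (Or.inl ⟨hs, hgt⟩)
  have hfil : 𝓝[I] t ≤ 𝓝[(I ∩ Set.Iio t) ∪ ((I ∩ Set.Ioi t) ∪ {t})] t := nhdsWithin_mono t hsub
  rw [nhdsWithin_union, nhdsWithin_union] at hfil
  refine Filter.Tendsto.mono_left ?_ hfil
  refine Filter.Tendsto.sup h1 (Filter.Tendsto.sup h2 ?_)
  rw [nhdsWithin_singleton]
  exact tendsto_pure_nhds k t

/-- A regulated function is bounded on compact subintervals. -/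
lemma regulated_bounded {k : ℝ → ℝ} {I : Set ℝ} (hreg : RegulatedOn k I)
    {a b : ℝ} (hsub : Set.Icc a b ⊆ I) : ∃ M : ℝ, ∀ s ∈ Set.Icc a b, |k s| ≤ M := by
  rcases Set.eq_empty_or_nonempty (Set.Icc a b) with he | hne
  · exact ⟨0, fun s hs => absurd (he ▸ hs) (Set.notMem_empty s)⟩
  have hloc : ∀ t : ℝ, ∃ (U : Set ℝ) (M : ℝ),
      t ∈ Set.Icc a b → U ∈ 𝓝 t ∧ ∀ s ∈ I ∩ U, |k s| ≤ M := by
    intro t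
    by_cases ht : t ∈ Set.Icc a b
    · obtain ⟨⟨l₁, h₁⟩, ⟨l₂, h₂⟩⟩ := hreg t (hsub ht)
      have e₁ : ∀ᶠ s in 𝓝 t, s ∈ I ∩ Set.Iio t → |k s| ≤ |l₁| + 1 := by
        have hev : ∀ᶠ s in 𝓝[I ∩ Set.Iio t] t, |k s| ≤ |l₁| + 1 := by
          filter_upwards [h₁ (Metric.ball_mem_nhds l₁ one_pos)] with s hs
          have : |k s - l₁| < 1 := by simpa [Real.dist_eq] using hs
          calc |k s| ≤ |k s - l₁| + |l₁| := by
                have := abs_sub_abs_le_abs_sub (k s) l₁; linarith [abs_abs (k s)]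
          _ ≤ |l₁| + 1 := by linarith
        exact eventually_nhdsWithin_iff.1 hev
      have e₂ : ∀ᶠ s in 𝓝 t, s ∈ I ∩ Set.Ioi t → |k s| ≤ |l₂| + 1 := by
        have hev : ∀ᶠ s in 𝓝[I ∩ Set.Ioi t] t, |k s| ≤ |l₂| + 1 := by
          filter_upwards [h₂ (Metric.ball_mem_nhds l₂ one_pos)] with s hs
          have : |k s - l₂| < 1 := by simpa [Real.dist_eq] using hs
          calc |k s| ≤ |k s - l₂| + |l₂| := by
                have := abs_sub_abs_le_abs_sub (k s) l₂; linarith [abs_abs (k s)]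
          _ ≤ |l₂| + 1 := by linarith
        exact eventually_nhdsWithin_iff.1 hev
      refine ⟨{s | (s ∈ I ∩ Set.Iio t → |k s| ≤ |l₁| + 1) ∧
        (s ∈ I ∩ Set.Ioi t → |k s| ≤ |l₂| + 1)},
        max (max (|l₁| + 1) (|l₂| + 1)) (|k t|), fun _ => ⟨(e₁.and e₂), fun s hs => ?_⟩⟩
      rcases lt_trichotomy s t with hlt | heq | hgt
      · exact le_trans (hs.2.1 ⟨hs.1, hlt⟩) (le_max_of_le_left (le_max_left _ _))
      · subst heq; exact le_max_right _ _
      · exact le_trans (hs.2.2 ⟨hs.1, hgt⟩) (le_max_of_le_left (le_max_right _ _))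
    · exact ⟨Set.univ, 0, fun h' => absurd h' ht⟩
  choose U M hUM using hloc
  obtain ⟨T, hTmem, hTcov⟩ := (isCompact_Icc (a := a) (b := b)).elim_nhds_subcover U
    (fun t ht => (hUM t ht).1)
  have hTne : T.Nonempty := by
    obtain ⟨x, hx⟩ := hne
    obtain ⟨t, htT, -⟩ := Set.mem_iUnion₂.1 (hTcov hx)
    exact ⟨t, htT⟩
  refine ⟨T.sup' hTne M, fun s hs => ?_⟩
  obtain ⟨t, htT, hst⟩ := Set.mem_iUnion₂.1 (hTcov hs)
  exact le_trans ((hUM t (hTmem t htT)).2 s ⟨hsub hs, hst⟩) (Finset.le_sup' M htT)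


/-- Fundamental estimate for approximate solutions of an ODE `ċ(t) = f(t, c(t))` with a
time-dependent Lipschitz bound `k` (a positive regulated function) on an interval `I`:
if `u₁, u₂ : I → W` are differentiable, `‖u̇ᵢ(t) − f(t, uᵢ(t))‖ ≤ εᵢ` on `I`, then for
`t₀ ≤ t` in `I`,
`‖u₁(t) − u₂(t)‖ ≤ ‖u₁(t₀) − u₂(t₀)‖ Λ(t) + (ε₁ + ε₂) Π(t)` where
`Λ(t) = 1 + ∫_{t₀}^{t} k(s) exp(∫_s^t k) ds` and
`Π(t) = (t − t₀) + ∫_{t₀}^{t} (s − t₀) k(s) exp(∫_s^t k) ds`. -/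
theorem approx_solutions_dist_le
    {E : Type*} [NormedAddCommGroup E] [NormedSpace ℝ E]
    (I : Set ℝ) (hI : Set.OrdConnected I)
    (W : Set E) (hW : IsOpen W)
    (k : ℝ → ℝ) (hk_pos : ∀ t ∈ I, 0 < k t) (hk_reg : RegulatedOn k I)
    (f : ℝ → E → E)
    (hf : ∀ t ∈ I, ∀ x₁ ∈ W, ∀ x₂ ∈ W, ‖f t x₁ - f t x₂‖ ≤ k t * ‖x₁ - x₂‖)
    (u₁ u₂ u₁' u₂' : ℝ → E)
    (hu₁W : ∀ t ∈ I, u₁ t ∈ W) (hu₂W : ∀ t ∈ I, u₂ t ∈ W)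
    (hd₁ : ∀ t ∈ I, HasDerivWithinAt u₁ (u₁' t) I t)
    (hd₂ : ∀ t ∈ I, HasDerivWithinAt u₂ (u₂' t) I t)
    (ε₁ ε₂ : ℝ)
    (happ₁ : ∀ t ∈ I, ‖u₁' t - f t (u₁ t)‖ ≤ ε₁)
    (happ₂ : ∀ t ∈ I, ‖u₂' t - f t (u₂ t)‖ ≤ ε₂)
    (t₀ : ℝ) (ht₀ : t₀ ∈ I) :
    ∀ t ∈ I, t₀ ≤ t →
      ‖u₁ t - u₂ t‖ ≤
        ‖u₁ t₀ - u₂ t₀‖ * (1 + ∫ s in t₀..t, k s * Real.exp (∫ τ in s..t, k τ)) +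
        (ε₁ + ε₂) * ((t - t₀) + ∫ s in t₀..t, (s - t₀) * k s * Real.exp (∫ τ in s..t, k τ)) := by
  intro t₁ ht₁ ht01
  set ε : ℝ := ε₁ + ε₂ with hεdef
  set g : ℝ → E := fun s => u₁ s - u₂ s with hgdef
  set φ : ℝ → ℝ := fun s => ‖g s‖ with hφdef
  set δ : ℝ := ‖u₁ t₀ - u₂ t₀‖ with hδdef
  have hδφ : δ = φ t₀ := rfl
  set J : Set ℝ := Set.Icc t₀ t₁ with hJdef
  have hJI : J ⊆ I := hI.out ht₀ ht₁
  set g' : ℝ → E := fun s => u₁' s - u₂' s with hg'def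
  have hg : ∀ s ∈ I, HasDerivWithinAt g (g' s) I s := fun s hs => (hd₁ s hs).sub (hd₂ s hs)
  have hgcont : ContinuousOn g J := fun s hs => ((hg s (hJI hs)).continuousWithinAt).mono hJI
  have hφcont : ContinuousOn φ J := hgcont.norm
  -- pointwise bound on the derivative
  have hg'bound : ∀ s ∈ I, ‖g' s‖ ≤ k s * φ s + ε := by
    intro s hs
    have h1 := happ₁ s hs
    have h2 := happ₂ s hs
    have h3 := hf s hs (u₁ s) (hu₁W s hs) (u₂ s) (hu₂W s hs)
    have hdecomp : g' s = (u₁' s - f s (u₁ s)) + ((f s (u₁ s) - f s (u₂ s)) +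
        (f s (u₂ s) - u₂' s)) := by
      simp only [hg'def]; abel
    rw [hdecomp]
    have h2' : ‖f s (u₂ s) - u₂' s‖ ≤ ε₂ := by rwa [norm_sub_rev]
    calc ‖(u₁' s - f s (u₁ s)) + ((f s (u₁ s) - f s (u₂ s)) + (f s (u₂ s) - u₂' s))‖
        ≤ ‖u₁' s - f s (u₁ s)‖ + (‖f s (u₁ s) - f s (u₂ s)‖ + ‖f s (u₂ s) - u₂' s‖) :=
          (norm_add_le _ _).trans (add_le_add le_rfl (norm_add_le _ _))
      _ ≤ ε₁ + (k s * ‖u₁ s - u₂ s‖ + ε₂) := add_le_add h1 (add_le_add h3 h2')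
      _ = k s * φ s + ε := by simp only [hεdef, hφdef, hgdef]; ring
  -- bounds
  obtain ⟨Mk, hMk⟩ := regulated_bounded hk_reg hJI
  obtain ⟨Mφ, hMφ⟩ := isCompact_Icc.exists_bound_of_continuousOn hφcont
  have hMφ' : ∀ s ∈ J, φ s ≤ Mφ := fun s hs =>
    (le_abs_self _).trans ((Real.norm_eq_abs _ ▸ hMφ s hs))
  have hMknn : ∀ s ∈ J, k s ≤ Mk := fun s hs => (le_abs_self _).trans (hMk s hs)
  -- measurability of k on J
  have hkmeasJ : AEStronglyMeasurable k (volume.restrict J) := by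
    have hD := countable_discont hk_reg
    set S : Set ℝ := J \ {t ∈ I | ¬ ContinuousWithinAt k I t} with hSdef
    have hScont : ContinuousOn k S := by
      intro s hs
      have hsI : s ∈ I := hJI hs.1
      have : ContinuousWithinAt k I s := by
        by_contra hc
        exact hs.2 ⟨hsI, hc⟩
      exact (this.mono hJI).mono Set.diff_subset
    have hSmeas : MeasurableSet S := measurableSet_Icc.diff hD.measurableSet
    have hJS : J =ᵐ[volume] S := by
      refine (MeasureTheory.ae_eq_set.2 ⟨?_, ?_⟩)
      · refine measure_mono_null (fun x hx => ?_) (hD.measure_zero _)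
        by_contra hc
        exact hx.2 ⟨hx.1, hc⟩
      · exact measure_mono_null (fun x hx => (hx.2 hx.1.1).elim) measure_empty
    rw [Measure.restrict_congr_set hJS]
    exact hScont.aestronglyMeasurable hSmeas
  have hJvol : volume J < ⊤ := measure_Icc_lt_top
  have hkint : IntegrableOn k J := by
    refine Integrable.mono' (g := fun _ => Mk) (integrableOn_const hJvol.ne) hkmeasJ ?_
    filter_upwards [ae_restrict_mem measurableSet_Icc] with s hs
    rw [Real.norm_eq_abs]; exact hMk s hs
  have hkII : IntervalIntegrable k volume t₀ t₁ :=
    (intervalIntegrable_iff_integrableOn_Icc_of_le ht01).2 hkint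
  set K : ℝ → ℝ := fun x => ∫ s in t₀..x, k s with hKdef
  -- continuity of primitives
  have hprimcont : ∀ (h : ℝ → ℝ), IntegrableOn h J →
      ContinuousOn (fun y => ∫ s in t₀..y, h s) J := by
    intro h hint
    have := intervalIntegral.continuousOn_primitive_interval (μ := volume) (a := t₀) (b := t₁)
      (f := h) (by rwa [Set.uIcc_of_le ht01])
    rwa [Set.uIcc_of_le ht01] at this
  have hKcont : ContinuousOn K J := hprimcont k hkint
  obtain ⟨MK, hMK⟩ := isCompact_Icc.exists_bound_of_continuousOn hKcont
  -- right limits of k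
  have hkpex : ∀ x : ℝ, ∃ r : ℝ, x ∈ Set.Ioo t₀ t₁ →
      Filter.Tendsto k (𝓝[Set.Ioi x] x) (𝓝 r) ∧ 0 ≤ r := by
    intro x
    by_cases hx : x ∈ Set.Ioo t₀ t₁
    · obtain ⟨l, hl⟩ := (hk_reg x (hJI (Set.Ioo_subset_Icc_self hx))).2
      have hl' : Filter.Tendsto k (𝓝[Set.Ioi x] x) (𝓝 l) := by
        rw [← nhdsWithin_Ioo_eq_nhdsGT hx.2]
        exact hl.mono_left (nhdsWithin_mono x
          (fun s hs => ⟨hJI ⟨(hx.1.trans hs.1).le, hs.2.le⟩, hs.1⟩))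
      refine ⟨l, fun _ => ⟨hl', ?_⟩⟩
      refine ge_of_tendsto hl' ?_
      filter_upwards [Ioo_mem_nhdsGT hx.2] with s hs
      exact (hk_pos s (hJI ⟨(hx.1.trans hs.1).le, hs.2.le⟩)).le
    · exact ⟨0, fun h' => absurd h' hx⟩
  choose kp hkp using hkpex
  -- FTC for primitives with right limits
  have hprim : ∀ (h : ℝ → ℝ), IntegrableOn h J →
      ∀ x ∈ Set.Ioo t₀ t₁, ∀ c : ℝ, Filter.Tendsto h (𝓝[Set.Ioi x] x) (𝓝 c) →
      HasDerivWithinAt (fun y => ∫ s in t₀..y, h s) c (Set.Ioi x) x := by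
    intro h hint x hx c hc
    have hii : IntervalIntegrable h volume t₀ x :=
      (intervalIntegrable_iff_integrableOn_Icc_of_le hx.1.le).2
        (hint.mono_set (Set.Icc_subset_Icc le_rfl hx.2.le))
    have hsm : StronglyMeasurableAtFilter h (𝓝[Set.Ioi x] x) volume := by
      show ∃ u ∈ 𝓝[Set.Ioi x] x, AEStronglyMeasurable h (volume.restrict u)
      refine ⟨Set.Ioo x t₁, Ioo_mem_nhdsGT hx.2, ?_⟩
      have hIooJ : Set.Ioo x t₁ ⊆ J := fun s hs => ⟨(hx.1.trans hs.1).le, hs.2.le⟩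
      exact hint.1.mono_measure (Measure.restrict_mono hIooJ le_rfl)
    exact (integral_hasDerivWithinAt_of_tendsto_ae_right (s := Set.Ici x) (t := Set.Ioi x)
      hii hsm (hc.mono_left inf_le_left)).mono Set.Ioi_subset_Ici_self
  -- completion of E
  set ι : E →L[ℝ] Completion E := Completion.toComplL with hιdef
  have hιnorm : ∀ x : E, ‖ι x‖ = ‖x‖ := fun x => by
    rw [show ι x = (x : Completion E) from congrFun Completion.coe_toComplL x]
    exact Completion.norm_coe x
  have hgIci : ∀ x ∈ Set.Ico t₀ t₁, HasDerivWithinAt g (g' x) (Set.Ici x) x := by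
    intro x hx
    refine (hg x (hJI ⟨hx.1, hx.2.le⟩)).mono_of_mem_nhdsWithin ?_
    have h1 : Set.Icc x t₁ ∈ 𝓝[Set.Ici x] x := Icc_mem_nhdsGE_of_mem ⟨le_rfl, hx.2⟩
    exact Filter.mem_of_superset h1 (fun s hs => hJI ⟨hx.1.trans hs.1, hs.2⟩)
  have hgiIci : ∀ x ∈ Set.Ico t₀ t₁,
      HasDerivWithinAt (fun y => ι (g y)) (ι (g' x)) (Set.Ici x) x :=
    fun x hx => ι.hasFDerivAt.comp_hasDerivWithinAt x (hgIci x hx)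
  have hgi'meas : AEStronglyMeasurable (fun s => ι (g' s)) (volume.restrict J) := by
    have hsm := (stronglyMeasurable_derivWithin_Ici (fun y => ι (g y))).aestronglyMeasurable
      (μ := volume.restrict J)
    refine hsm.congr ?_
    have h1 : ∀ᵐ s ∂volume.restrict J, s ∈ J := ae_restrict_mem measurableSet_Icc
    have h2 : ∀ᵐ s ∂volume.restrict J, s ≠ t₁ := by
      rw [ae_iff]
      have he : {s : ℝ | ¬ s ≠ t₁} = {t₁} := by ext s; simp
      rw [he, Measure.restrict_apply (measurableSet_singleton t₁)]
      exact measure_mono_null Set.inter_subset_left Real.volume_singleton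
    filter_upwards [h1, h2] with s hsJ hsne
    exact (hgiIci s ⟨hsJ.1, lt_of_le_of_ne hsJ.2 hsne⟩).derivWithin
      ((uniqueDiffOn_Ici s) s Set.self_mem_Ici)
  have hgi'int : IntervalIntegrable (fun s => ι (g' s)) volume t₀ t₁ := by
    refine (intervalIntegrable_iff_integrableOn_Icc_of_le ht01).2 ?_
    refine Integrable.mono' (g := fun _ => Mk * Mφ + ε)
      (integrableOn_const hJvol.ne) hgi'meas ?_
    filter_upwards [ae_restrict_mem measurableSet_Icc] with s hs
    rw [hιnorm]
    refine (hg'bound s (hJI hs)).trans ?_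
    have h0 : 0 ≤ φ s := norm_nonneg _
    exact add_le_add (mul_le_mul (hMknn s hs) (hMφ' s hs) h0
      ((hk_pos s (hJI hs)).le.trans (hMknn s hs))) le_rfl
  have hφmeas : AEStronglyMeasurable φ (volume.restrict J) :=
    hφcont.aestronglyMeasurable measurableSet_Icc
  have hkφint : IntegrableOn (fun s => k s * φ s) J := by
    refine Integrable.mono' (g := fun _ => Mk * Mφ) (integrableOn_const hJvol.ne)
      (hkmeasJ.mul hφmeas) ?_
    filter_upwards [ae_restrict_mem measurableSet_Icc] with s hs
    rw [Real.norm_eq_abs, abs_mul, abs_of_nonneg (norm_nonneg (g s) : (0:ℝ) ≤ φ s)]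
    exact mul_le_mul (hMk s hs) (hMφ' s hs) (norm_nonneg _) ((abs_nonneg _).trans (hMk s hs))
  have hkφII : IntervalIntegrable (fun s => k s * φ s) volume t₀ t₁ :=
    (intervalIntegrable_iff_integrableOn_Icc_of_le ht01).2 hkφint
  -- step 1 : integral inequality for φ
  set ψ : ℝ → ℝ := fun x => ∫ s in t₀..x, k s * φ s with hψdef
  have hstep1 : ∀ x ∈ J, φ x ≤ δ + ε * (x - t₀) + ψ x := by
    intro x hx
    have hx1 : t₀ ≤ x := hx.1
    have hsubx : Set.uIcc t₀ x ⊆ Set.uIcc t₀ t₁ := by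
      rw [Set.uIcc_of_le hx1, Set.uIcc_of_le ht01]
      exact Set.Icc_subset_Icc le_rfl hx.2
    have hFTC : (∫ s in t₀..x, ι (g' s)) = ι (g x) - ι (g t₀) := by
      refine integral_eq_sub_of_hasDeriv_right_of_le hx1
        (Continuous.comp_continuousOn ι.continuous
          (hgcont.mono (Set.Icc_subset_Icc le_rfl hx.2)))
        (fun y hy => (hgiIci y ⟨hy.1.le, hy.2.trans_le hx.2⟩).mono Set.Ioi_subset_Ici_self)
        (hgi'int.mono_set hsubx)
    have h1 : ‖ι (g x) - ι (g t₀)‖ ≤ ∫ s in t₀..x, ‖ι (g' s)‖ := by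
      rw [← hFTC]
      exact intervalIntegral.norm_integral_le_integral_norm hx1
    have h2 : (∫ s in t₀..x, ‖ι (g' s)‖) ≤ ∫ s in t₀..x, (k s * φ s + ε) := by
      refine intervalIntegral.integral_mono_on hx1 ((hgi'int.mono_set hsubx).norm)
        ((hkφII.add intervalIntegrable_const).mono_set hsubx) ?_
      intro s hs
      rw [hιnorm]
      exact hg'bound s (hJI ⟨hs.1, hs.2.trans hx.2⟩)
    have h3 : ‖g x - g t₀‖ = ‖ι (g x) - ι (g t₀)‖ := by rw [← map_sub, hιnorm]
    have h4 : φ x ≤ φ t₀ + ‖g x - g t₀‖ := by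
      have h5 := norm_sub_norm_le (g x) (g t₀)
      simp only [hφdef]
      linarith
    have hsplit : (∫ s in t₀..x, (k s * φ s + ε)) = ψ x + ε * (x - t₀) := by
      rw [intervalIntegral.integral_add (hkφII.mono_set hsubx) intervalIntegrable_const,
        intervalIntegral.integral_const]
      simp only [hψdef, smul_eq_mul]
      ring
    have h6 : ‖g x - g t₀‖ ≤ ψ x + ε * (x - t₀) := by
      rw [h3, ← hsplit]
      exact h1.trans h2
    rw [hδφ]
    linarith
  -- auxiliary functions for the comparison argument
  set v : ℝ → ℝ := fun s => δ + ε * (s - t₀) with hvdef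
  have hvcont : Continuous v := by
    simp only [hvdef]
    exact continuous_const.add (continuous_const.mul (continuous_id.sub continuous_const))
  obtain ⟨Mv, hMv⟩ := isCompact_Icc.exists_bound_of_continuousOn
    (hvcont.continuousOn : ContinuousOn v J)
  have hexpcont : ContinuousOn (fun s => Real.exp (-K s)) J :=
    Real.continuous_exp.comp_continuousOn hKcont.neg
  set w : ℝ → ℝ := fun s => v s * k s * Real.exp (-K s) with hwdef
  have hwint : IntegrableOn w J := by
    refine Integrable.mono' (g := fun _ => Mv * Mk * Real.exp MK)
      (integrableOn_const hJvol.ne)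
      ((hvcont.aestronglyMeasurable.mul hkmeasJ).mul
        (hexpcont.aestronglyMeasurable measurableSet_Icc)) ?_
    filter_upwards [ae_restrict_mem measurableSet_Icc] with s hs
    rw [Real.norm_eq_abs, abs_mul, abs_mul, abs_of_pos (Real.exp_pos _)]
    have h1 : |v s| ≤ Mv := (Real.norm_eq_abs (v s)) ▸ hMv s hs
    have h2 : Real.exp (-K s) ≤ Real.exp MK := by
      refine Real.exp_le_exp.2 ?_
      have h3 := hMK s hs
      rw [Real.norm_eq_abs] at h3
      linarith [neg_abs_le (K s)]
    have hMknn' : (0:ℝ) ≤ Mk := (abs_nonneg _).trans (hMk t₀ (Set.left_mem_Icc.2 ht01))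
    have hMvnn : (0:ℝ) ≤ Mv := (abs_nonneg _).trans h1
    exact mul_le_mul (mul_le_mul h1 (hMk s hs) (abs_nonneg _) hMvnn) h2
      (Real.exp_pos _).le (by positivity)
  set P : ℝ → ℝ := fun x => ∫ s in t₀..x, w s with hPdef
  set F : ℝ → ℝ := fun x => P x - ψ x * Real.exp (-K x) with hFdef
  have hψcont : ContinuousOn ψ J := hprimcont _ hkφint
  have hPcont : ContinuousOn P J := hprimcont _ hwint
  have hFcont : ContinuousOn F J := hPcont.sub (hψcont.mul hexpcont)
  set Fd : ℝ → ℝ := fun x => kp x * Real.exp (-K x) * (v x + ψ x - φ x) with hFddef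
  have hFderiv : ∀ x ∈ Set.Ioo t₀ t₁, HasDerivWithinAt F (Fd x) (Set.Ioi x) x := by
    intro x hx
    have hxJ : x ∈ J := Set.Ioo_subset_Icc_self hx
    have hnI : 𝓝[Set.Ioi x] x ≤ 𝓝[J] x := by
      rw [← nhdsWithin_Ioo_eq_nhdsGT hx.2]
      exact nhdsWithin_mono x (fun s hs => ⟨(hx.1.trans hs.1).le, hs.2.le⟩)
    have htk : Filter.Tendsto k (𝓝[Set.Ioi x] x) (𝓝 (kp x)) := (hkp x hx).1
    have hK' : HasDerivWithinAt K (kp x) (Set.Ioi x) x := hprim k hkint x hx _ htk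
    have hψ' : HasDerivWithinAt ψ (kp x * φ x) (Set.Ioi x) x :=
      hprim _ hkφint x hx _ (htk.mul ((hφcont x hxJ).mono_left hnI))
    have hP' : HasDerivWithinAt P (v x * kp x * Real.exp (-K x)) (Set.Ioi x) x := by
      refine hprim _ hwint x hx _ ?_
      have hv : Filter.Tendsto v (𝓝[Set.Ioi x] x) (𝓝 (v x)) :=
        (hvcont.continuousAt.continuousWithinAt).tendsto
      have hE : Filter.Tendsto (fun s => Real.exp (-K s)) (𝓝[Set.Ioi x] x)
          (𝓝 (Real.exp (-K x))) := (hexpcont x hxJ).mono_left hnI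
      exact (hv.mul htk).mul hE
    have hE' : HasDerivWithinAt (fun y => Real.exp (-K y))
        (Real.exp (-K x) * (-kp x)) (Set.Ioi x) x := hK'.neg.exp
    have hcomb := hP'.sub (hψ'.mul hE')
    refine hcomb.congr_deriv ?_
    show _ = kp x * Real.exp (-K x) * (v x + ψ x - φ x)
    ring
  have hF0 : F t₀ = 0 := by
    simp only [hFdef, hPdef, hψdef, intervalIntegral.integral_same]
    ring
  have hFd_nonneg : ∀ x ∈ Set.Ioo t₀ t₁, (0:ℝ) ≤ Fd x := by
    intro x hx
    have h1 := hstep1 x (Set.Ioo_subset_Icc_self hx)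
    have h2 : 0 ≤ kp x := (hkp x hx).2
    refine mul_nonneg (mul_nonneg h2 (Real.exp_pos _).le) ?_
    simp only [hvdef]
    linarith
  have hFpos : 0 ≤ F t₁ := by
    have h := integral_le_sub_of_hasDeriv_right_of_le (g := F) (φ := fun _ => (0:ℝ)) (g' := Fd)
      ht01 hFcont hFderiv (integrableOn_const hJvol.ne) hFd_nonneg
    simp only [intervalIntegral.integral_zero, hF0, sub_zero] at h
    exact h
  have hψle : ψ t₁ * Real.exp (-K t₁) ≤ P t₁ := by
    simp only [hFdef] at hFpos
    linarith
  -- final assembly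
  set Ex : ℝ → ℝ := fun s => Real.exp (K t₁ - K s) with hExdef
  have hψle2 : ψ t₁ ≤ ∫ s in t₀..t₁, v s * k s * Ex s := by
    have hmul : ψ t₁ ≤ P t₁ * Real.exp (K t₁) := by
      have h5 := mul_le_mul_of_nonneg_right hψle (Real.exp_pos (K t₁)).le
      rwa [mul_assoc, ← Real.exp_add, neg_add_cancel, Real.exp_zero, mul_one] at h5
    refine hmul.trans_eq ?_
    rw [hPdef, ← intervalIntegral.integral_mul_const]
    refine intervalIntegral.integral_congr (fun s hs => ?_)
    simp only [hwdef, hExdef]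
    rw [sub_eq_add_neg, Real.exp_add]
    ring
  have hExcont : ContinuousOn Ex J :=
    Real.continuous_exp.comp_continuousOn (continuousOn_const.sub hKcont)
  obtain ⟨ME, hME⟩ := isCompact_Icc.exists_bound_of_continuousOn hExcont
  have hMEnn : (0:ℝ) ≤ ME := le_trans (norm_nonneg _) (hME t₀ (Set.left_mem_Icc.2 ht01))
  have hMknn' : (0:ℝ) ≤ Mk := (abs_nonneg _).trans (hMk t₀ (Set.left_mem_Icc.2 ht01))
  have hkEint : IntegrableOn (fun s => k s * Ex s) J := by
    refine Integrable.mono' (g := fun _ => Mk * ME) (integrableOn_const hJvol.ne)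
      (hkmeasJ.mul (hExcont.aestronglyMeasurable measurableSet_Icc)) ?_
    filter_upwards [ae_restrict_mem measurableSet_Icc] with s hs
    rw [Real.norm_eq_abs, abs_mul]
    have h2 : |Ex s| ≤ ME := (Real.norm_eq_abs (Ex s)) ▸ hME s hs
    exact mul_le_mul (hMk s hs) h2 (abs_nonneg _) hMknn'
  have hskEint : IntegrableOn (fun s => (s - t₀) * k s * Ex s) J := by
    refine Integrable.mono' (g := fun _ => (t₁ - t₀) * Mk * ME)
      (integrableOn_const hJvol.ne)
      (((continuous_id.sub continuous_const).aestronglyMeasurable.mul hkmeasJ).mul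
        (hExcont.aestronglyMeasurable measurableSet_Icc)) ?_
    filter_upwards [ae_restrict_mem measurableSet_Icc] with s hs
    rw [Real.norm_eq_abs, abs_mul, abs_mul]
    have h2 : |Ex s| ≤ ME := (Real.norm_eq_abs (Ex s)) ▸ hME s hs
    have h3 : |s - t₀| ≤ t₁ - t₀ := by
      rw [abs_of_nonneg (by linarith [hs.1] : (0:ℝ) ≤ s - t₀)]
      linarith [hs.2]
    refine mul_le_mul (mul_le_mul h3 (hMk s hs) (abs_nonneg _) (by linarith [hs.1, hs.2])) h2
      (abs_nonneg _) (mul_nonneg (by linarith) hMknn')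
  have hkEII : IntervalIntegrable (fun s => k s * Ex s) volume t₀ t₁ :=
    (intervalIntegrable_iff_integrableOn_Icc_of_le ht01).2 hkEint
  have hskEII : IntervalIntegrable (fun s => (s - t₀) * k s * Ex s) volume t₀ t₁ :=
    (intervalIntegrable_iff_integrableOn_Icc_of_le ht01).2 hskEint
  have hsplitv : (∫ s in t₀..t₁, v s * k s * Ex s) =
      δ * (∫ s in t₀..t₁, k s * Ex s) + ε * (∫ s in t₀..t₁, (s - t₀) * k s * Ex s) := by
    rw [← intervalIntegral.integral_const_mul, ← intervalIntegral.integral_const_mul,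
      ← intervalIntegral.integral_add (hkEII.const_mul δ) (hskEII.const_mul ε)]
    refine intervalIntegral.integral_congr (fun s hs => ?_)
    simp only [hvdef]
    ring
  have hgoal1 : (∫ s in t₀..t₁, k s * Real.exp (∫ τ in s..t₁, k τ)) =
      ∫ s in t₀..t₁, k s * Ex s := by
    refine intervalIntegral.integral_congr (fun s hs => ?_)
    rw [Set.uIcc_of_le ht01] at hs
    have h1 : IntervalIntegrable k volume t₀ s :=
      (intervalIntegrable_iff_integrableOn_Icc_of_le hs.1).2
        (hkint.mono_set (Set.Icc_subset_Icc le_rfl hs.2))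
    have h2 : (∫ τ in s..t₁, k τ) = K t₁ - K s :=
      (intervalIntegral.integral_interval_sub_left hkII h1).symm
    rw [h2]
  have hgoal2 : (∫ s in t₀..t₁, (s - t₀) * k s * Real.exp (∫ τ in s..t₁, k τ)) =
      ∫ s in t₀..t₁, (s - t₀) * k s * Ex s := by
    refine intervalIntegral.integral_congr (fun s hs => ?_)
    rw [Set.uIcc_of_le ht01] at hs
    have h1 : IntervalIntegrable k volume t₀ s :=
      (intervalIntegrable_iff_integrableOn_Icc_of_le hs.1).2
        (hkint.mono_set (Set.Icc_subset_Icc le_rfl hs.2))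
    have h2 : (∫ τ in s..t₁, k τ) = K t₁ - K s :=
      (intervalIntegral.integral_interval_sub_left hkII h1).symm
    rw [h2]
  rw [hgoal1, hgoal2]
  have hfinal := hstep1 t₁ (Set.right_mem_Icc.2 ht01)
  have heqφ : ‖u₁ t₁ - u₂ t₁‖ = φ t₁ := rfl
  rw [heqφ]
  have hchain : ψ t₁ ≤ δ * (∫ s in t₀..t₁, k s * Ex s) +
      ε * (∫ s in t₀..t₁, (s - t₀) * k s * Ex s) := hψle2.trans_eq hsplitv
  calc φ t₁ ≤ δ + ε * (t₁ - t₀) + ψ t₁ := hfinal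
    _ ≤ δ + ε * (t₁ - t₀) + (δ * (∫ s in t₀..t₁, k s * Ex s) +
        ε * (∫ s in t₀..t₁, (s - t₀) * k s * Ex s)) := by linarith
    _ = δ * (1 + ∫ s in t₀..t₁, k s * Ex s) +
        ε * ((t₁ - t₀) + ∫ s in t₀..t₁, (s - t₀) * k s * Ex s) := by ring
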